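/- arXiv:1211.4134 — 5 statements merged into one kernel-verified Lean document; each statement's English description precedes it below -/
import Mathlib

section
/- Let κ be a regular uncountable cardinal. Then J_κ, the set of bounded operators on ℓ²(κ) whose range has Hilbert space dimension strictly less than κ, is a proper two-sided ideal of B(ℓ²(κ)) which is closed under adjoints and closed in the operator norm topology, and it contains every compact operator on ℓ²(κ). -/
noncomputable section

open Set

/-- The Hilbert space ℓ²(o): square-summable families indexed by the ordinals below `o`. -/
abbrev L2 (o : Ordinal) : Type := ↥(lp (fun _ : o.ToType => ℂ) 2)

/-- Bounded linear operators on ℓ²(o). -/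
abbrev Bd (o : Ordinal) : Type := L2 o →L[ℂ] L2 o

/-- The ordinal (below `o`) corresponding to an index `i` of ℓ²(o). -/
def ordOf {o : Ordinal} (i : o.ToType) : Ordinal := ((Ordinal.ToType.mk (o := o)).symm i : Ordinal)

/-- `InvOn o S x` : the closed subspace of ℓ²(o) of functions supported on `S`
is an invariant subspace of `x`. -/
def InvOn (o : Ordinal) (S : Set Ordinal) (x : Bd o) : Prop :=
  ∀ f : L2 o, (∀ i : o.ToType, ordOf i ∉ S → f i = 0) →
    ∀ i : o.ToType, ordOf i ∉ S → x f i = 0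

/-- `Dclub o C` (the algebra `D[C]`) is the set of bounded operators `x` on ℓ²(o) such
that for every `α ∈ C`, ℓ²(α) is an invariant subspace of both `x` and its adjoint. -/
def Dclub (o : Ordinal) (C : Set Ordinal) : Set (Bd o) :=
  {x | ∀ α ∈ C, InvOn o (Set.Iio α) x ∧ InvOn o (Set.Iio α) (star x)}

/-- A club in (the ordinal) `o`: a closed unbounded subset of `o`. -/
def IsClub' (o : Ordinal) (C : Set Ordinal) : Prop :=
  C ⊆ Set.Iio o ∧
  (∀ s ⊆ C, s.Nonempty → sSup s < o → sSup s ∈ C) ∧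
  (∀ α < o, ∃ β ∈ C, α < β)

/-- The least element of `C` strictly above `α`. -/
def clubSucc (C : Set Ordinal) (α : Ordinal) : Ordinal :=
  sInf {β | β ∈ C ∧ α < β}

/-- `memJ κ x` : the (Hilbert space) dimension of the range of `x` is `< κ`;
equivalently (for uncountable κ), the range of `x` is contained in the closure
of a set of cardinality `< κ`. -/
def memJ (κ : Cardinal) {o : Ordinal} (x : Bd o) : Prop :=
  ∃ D : Set (L2 o), Cardinal.mk D < κ ∧ Set.range ⇑x ⊆ closure D


open Pointwise
set_option synthInstance.maxHeartbeats 1000000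
set_option maxHeartbeats 1000000

lemma memJ_mul_left (κ : Cardinal) {o : Ordinal} (a x : Bd o) (h : memJ κ x) :
    memJ κ (a * x) := by
  obtain ⟨D, hD, hR⟩ := h
  refine ⟨a '' D, Cardinal.mk_image_le.trans_lt hD, ?_⟩
  rintro - ⟨f, rfl⟩
  have : (a * x) f = a (x f) := rfl
  rw [this]
  exact (image_closure_subset_closure_image a.continuous)
    ⟨x f, hR (mem_range_self f), rfl⟩

lemma memJ_mul_right (κ : Cardinal) {o : Ordinal} (a x : Bd o) (h : memJ κ x) :
    memJ κ (x * a) := by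
  obtain ⟨D, hD, hR⟩ := h
  exact ⟨D, hD, by rintro - ⟨f, rfl⟩; exact hR (mem_range_self (a f))⟩

lemma memJ_zero (κ : Cardinal) (hunc : Cardinal.aleph0 < κ) {o : Ordinal} :
    memJ κ (0 : Bd o) := by
  refine ⟨{0}, by simpa using (Cardinal.one_lt_aleph0.trans hunc), ?_⟩
  rintro - ⟨f, rfl⟩
  exact subset_closure rfl

lemma mem_closure_add {o : Ordinal} {s t : Set (L2 o)} {a b : L2 o}
    (ha : a ∈ closure s) (hb : b ∈ closure t) : a + b ∈ closure (s + t) := by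
  rcases mem_closure_iff_seq_limit.1 ha with ⟨u, hu, hua⟩
  rcases mem_closure_iff_seq_limit.1 hb with ⟨v, hv, hvb⟩
  exact mem_closure_of_tendsto (hua.add hvb)
    (Filter.Eventually.of_forall fun n => add_mem_add (hu n) (hv n))

lemma memJ_add (κ : Cardinal) (hunc : Cardinal.aleph0 < κ) {o : Ordinal} (x y : Bd o)
    (hx : memJ κ x) (hy : memJ κ y) : memJ κ (x + y) := by
  obtain ⟨D₁, hD₁, hR₁⟩ := hx
  obtain ⟨D₂, hD₂, hR₂⟩ := hy
  refine ⟨D₁ + D₂, Cardinal.mk_add_le.trans_lt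
    (Cardinal.mul_lt_of_lt hunc.le hD₁ hD₂), ?_⟩
  rintro - ⟨f, rfl⟩
  exact mem_closure_add (hR₁ (mem_range_self f)) (hR₂ (mem_range_self f))

lemma memJ_star (κ : Cardinal) {o : Ordinal} (x : Bd o) (h : memJ κ x) :
    memJ κ (star x) := by
  obtain ⟨D, hD, hR⟩ := h
  refine ⟨⇑(star x) '' D, Cardinal.mk_image_le.trans_lt hD, ?_⟩
  set K : Submodule ℂ (L2 o) := (LinearMap.range (x : L2 o →ₗ[ℂ] L2 o)).topologicalClosure with hK
  haveI : CompleteSpace K := (Submodule.isClosed_topologicalClosure _).completeSpace_coe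
  rintro - ⟨f, rfl⟩
  set g : L2 o := (Submodule.orthogonalProjection K f : L2 o) with hg
  have hfg : f - g ∈ Kᗮ := Submodule.sub_starProjection_mem_orthogonal (K := K) f
  have hzero : star x (f - g) = 0 := by
    rw [ContinuousLinearMap.star_eq_adjoint]
    have h1 : inner ℂ (ContinuousLinearMap.adjoint x (f - g))
        (ContinuousLinearMap.adjoint x (f - g)) = (0 : ℂ) := by
      rw [ContinuousLinearMap.adjoint_inner_left]
      rw [inner_eq_zero_symm]
      exact (Submodule.mem_orthogonal K (f - g)).1 hfg _
        (Submodule.le_topologicalClosure _ (LinearMap.mem_range_self _ _))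
    exact inner_self_eq_zero.1 h1
  have hxf : star x f = star x g :=
    sub_eq_zero.1 (by rw [← map_sub]; exact hzero)
  rw [hxf]
  refine (image_closure_subset_closure_image (star x).continuous) ⟨g, ?_, rfl⟩
  have hgK : g ∈ closure (Set.range ⇑x) := by
    have hmem : g ∈ K := (Submodule.orthogonalProjection K f).2
    rw [hK] at hmem
    have h2 : g ∈ (((LinearMap.range (x : L2 o →ₗ[ℂ] L2 o)).topologicalClosure : Submodule ℂ (L2 o)) :
        Set (L2 o)) := hmem
    rw [Submodule.topologicalClosure_coe, LinearMap.coe_range] at h2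
    exact h2
  have : closure (Set.range ⇑x) ⊆ closure D := by
    rw [← closure_closure (s := D)]; exact closure_mono hR
  exact this hgK

lemma memJ_isClosed (κ : Cardinal.{0}) (hreg : κ.IsRegular) (hunc : Cardinal.aleph0 < κ)
    {o : Ordinal} : IsClosed {x : Bd o | memJ κ x} := by
  refine IsSeqClosed.isClosed ?_
  intro u x hu hux
  simp only [mem_setOf_eq, memJ] at hu ⊢
  choose D hD hR using hu
  refine ⟨⋃ n, D n, ?_, ?_⟩
  · exact (Cardinal.card_iUnion_lt_iff_forall_of_isRegular hreg (by simpa using hunc)).2 hD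
  · rintro - ⟨f, rfl⟩
    have ht : Filter.Tendsto (fun n => u n f) Filter.atTop (nhds (x f)) :=
      ((ContinuousLinearMap.apply ℂ (L2 o) f).continuous.tendsto x).comp hux
    refine isClosed_closure.mem_of_tendsto ht (Filter.Eventually.of_forall fun n => ?_)
    exact closure_mono (subset_iUnion D n) (hR n (mem_range_self f))

lemma memJ_of_compact (κ : Cardinal) (hunc : Cardinal.aleph0 < κ) {o : Ordinal}
    (x : Bd o) (hx : IsCompactOperator ⇑x) : memJ κ x := by
  obtain ⟨K, hK, hKmem⟩ := hx
  obtain ⟨r, hr, hball⟩ := Metric.mem_nhds_iff.1 hKmem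
  have hsep : ∀ n : ℕ, TopologicalSpace.IsSeparable ((n : ℂ) • K) := by
    intro n
    have := (hK.image (continuous_const_smul ((n : ℂ)))).isSeparable
    rwa [Set.image_smul] at this
  have hsepU : TopologicalSpace.IsSeparable (⋃ n : ℕ, (n : ℂ) • K) :=
    TopologicalSpace.IsSeparable.iUnion hsep
  obtain ⟨c, hc, hsub⟩ := hsepU
  refine ⟨c, lt_of_le_of_lt ?_ hunc, ?_⟩
  · haveI := hc.to_subtype; exact Cardinal.mk_le_aleph0
  · rintro - ⟨f, rfl⟩
    apply hsub
    set n : ℕ := ⌊‖f‖ / r⌋₊ + 1 with hn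
    have hnpos : (0 : ℝ) < n := by positivity
    have hfn : ‖f‖ < n * r := by
      have h1 : ‖f‖ / r < n := by
        rw [hn]; push_cast; exact Nat.lt_floor_add_one _
      calc ‖f‖ = ‖f‖ / r * r := by field_simp
        _ < n * r := by exact mul_lt_mul_of_pos_right h1 hr
    have hnz : ((n : ℂ)) ≠ 0 := by
      exact_mod_cast hnpos.ne'
    have hmemK : x ((n : ℂ)⁻¹ • f) ∈ K := by
      apply hball
      rw [Metric.mem_ball, dist_zero_right, norm_smul, norm_inv]
      have : ‖((n : ℕ) : ℂ)‖ = (n : ℝ) := by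
        simp
      rw [this]
      rw [inv_mul_lt_iff₀ hnpos]
      linarith
    refine mem_iUnion.2 ⟨n, Set.mem_smul_set.2 ⟨x ((n : ℂ)⁻¹ • f), hmemK, ?_⟩⟩
    rw [← map_smul, smul_inv_smul₀ hnz]

lemma memJ_not_one (κ : Cardinal.{0}) : ¬ memJ κ (1 : Bd κ.ord) := by
  rintro ⟨D, hD, hR⟩
  set e : κ.ord.ToType → L2 κ.ord := fun i => lp.single 2 i 1 with he_def
  have he : ∀ i, e i ∈ closure D := fun i => hR ⟨e i, rfl⟩
  have hex : ∀ i, ∃ d ∈ D, dist (e i) d < 1 / 2 := fun i =>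
    Metric.mem_closure_iff.1 (he i) _ (by norm_num)
  choose d hd hdist using hex
  have hinj : Function.Injective d := by
    intro i j hij
    by_contra hne
    have h1 : (1 : ℝ) ≤ ‖e i - e j‖ := by
      have h := lp.norm_apply_le_norm (p := 2) (by norm_num) (e i - e j) i
      have hval : (e i - e j) i = 1 := by
        have h2 : (e i - e j) i = e i i - e j i := rfl
        rw [h2, he_def]
        simp only
        rw [lp.single_apply_self, lp.single_apply_ne 2 j 1 hne]
        ring
      rwa [hval, norm_one] at h
    have h2 : ‖e i - e j‖ < 1 := by
      have : e i - e j = (e i - d i) + (d j - e j) := by rw [hij]; abel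
      rw [this]
      calc ‖(e i - d i) + (d j - e j)‖ ≤ ‖e i - d i‖ + ‖d j - e j‖ := norm_add_le _ _
        _ < 1 / 2 + 1 / 2 := by
            rw [← dist_eq_norm, ← dist_eq_norm]
            exact add_lt_add (hdist i) (by rw [dist_comm]; exact hdist j)
        _ = 1 := by norm_num
    linarith
  have hle : κ ≤ Cardinal.mk D := by
    have h := Cardinal.mk_le_of_injective
      (f := fun i : κ.ord.ToType => (⟨d i, hd i⟩ : D))
      (fun a b h => hinj (congrArg Subtype.val h))
    rwa [Cardinal.mk_ord_toType] at h
  exact absurd hD (not_lt.2 hle)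

/-- **Lemma.** For κ regular uncountable, J_κ = {x : the range of x has Hilbert dimension
< κ} is a proper, two-sided, adjoint-closed, norm-closed ideal of B(ℓ²(κ)) containing all
compact operators. -/
theorem Jideal_properties (κ : Cardinal.{0}) (hreg : κ.IsRegular)
    (hunc : Cardinal.aleph0 < κ) :
    memJ κ (0 : Bd κ.ord) ∧
    (∀ x y : Bd κ.ord, memJ κ x → memJ κ y → memJ κ (x + y)) ∧
    (∀ x : Bd κ.ord, memJ κ x → memJ κ (-x)) ∧
    (∀ (c : ℂ) (x : Bd κ.ord), memJ κ x → memJ κ (c • x)) ∧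
    (∀ a x : Bd κ.ord, memJ κ x → memJ κ (a * x)) ∧
    (∀ a x : Bd κ.ord, memJ κ x → memJ κ (x * a)) ∧
    (∀ x : Bd κ.ord, memJ κ x → memJ κ (star x)) ∧
    ¬ memJ κ (1 : Bd κ.ord) ∧
    IsClosed {x : Bd κ.ord | memJ κ x} ∧
    (∀ x : Bd κ.ord, IsCompactOperator ⇑x → memJ κ x) := by
  refine ⟨memJ_zero κ hunc, memJ_add κ hunc, ?_, ?_, memJ_mul_left κ, memJ_mul_right κ,
    memJ_star κ, memJ_not_one κ, memJ_isClosed κ hreg hunc, memJ_of_compact κ hunc⟩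
  · intro x hx
    have h : -x = (-1 : Bd κ.ord) * x := by rw [neg_one_mul]
    rw [h]; exact memJ_mul_left κ _ _ hx
  · intro c x hx
    have h : c • x = (c • (1 : Bd κ.ord)) * x := by rw [smul_mul_assoc, one_mul]
    rw [h]; exact memJ_mul_left κ _ _ hx
end
end

section
/- Let κ be a regular uncountable cardinal, let C be a club in κ, and let lim(C) denote the set of δ < κ that are limit points of C (so lim(C) ⊆ C is again a club). Define χ : κ → {−1, +1} by χ(α) = −1 if there exists δ ∈ lim(C) with δ ≤ α < succ_C(δ), and χ(α) = +1 otherwise. Then: (i) for every δ ∈ C, χ is constant on the interval [δ, succ_C(δ)); and (ii) for every δ ∈ lim(C), χ is not constant on the interval [δ, succ_{lim(C)}(δ)). -/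
noncomputable section

/-- A club in (the ordinal) `o`: a closed unbounded subset of `o`. -/
def IsClubBelow (o : Ordinal) (C : Set Ordinal) : Prop :=
  C ⊆ Set.Iio o ∧
  (∀ s ⊆ C, s.Nonempty → sSup s < o → sSup s ∈ C) ∧
  (∀ α < o, ∃ β ∈ C, α < β)

/-- `ConstOn h a b` : the function `h` is constant on the ordinal interval `[a, b)`. -/
def ConstOn {β : Type*} (h : Ordinal → β) (a b : Ordinal) : Prop :=
  ∀ ξ η : Ordinal, a ≤ ξ → ξ < b → a ≤ η → η < b → h ξ = h η

/-- The set of limit points of `C` below `o`: ordinals `δ` with `0 < δ = sup (C ∩ δ)`. -/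
def limPts (o : Ordinal) (C : Set Ordinal) : Set Ordinal :=
  {δ | δ < o ∧ 0 < δ ∧ δ = sSup (C ∩ Set.Iio δ)}

/-- Iterated club successor. -/
def iterSucc (C : Set Ordinal) (α : Ordinal) : ℕ → Ordinal
  | 0 => clubSucc C α
  | n + 1 => clubSucc C (iterSucc C α n)

theorem clubSucc_mem {o : Ordinal} {C : Set Ordinal} (hC : IsClubBelow o C) {α : Ordinal}
    (hα : α < o) : clubSucc C α ∈ C ∧ α < clubSucc C α := by
  have hne : {β | β ∈ C ∧ α < β}.Nonempty := by
    obtain ⟨β, hβ, hβ'⟩ := hC.2.2 α hα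
    exact ⟨β, hβ, hβ'⟩
  exact csInf_mem hne

theorem clubSucc_le {C : Set Ordinal} {α β : Ordinal} (hβ : β ∈ C) (h : α < β) :
    clubSucc C α ≤ β := csInf_le' ⟨hβ, h⟩

theorem limPts_subset {o : Ordinal} {C : Set Ordinal} (hC : IsClubBelow o C) :
    limPts o C ⊆ C := by
  rintro δ ⟨hδo, hδ0, hδs⟩
  have hne : (C ∩ Set.Iio δ).Nonempty := by
    by_contra h
    rw [Set.not_nonempty_iff_eq_empty] at h
    rw [h, csSup_empty] at hδs
    exact hδ0.ne' hδs
  have := hC.2.1 (C ∩ Set.Iio δ) Set.inter_subset_left hne (hδs ▸ hδo)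
  rwa [← hδs] at this

/-- limit points are unbounded below a regular uncountable cardinal. -/
theorem limPts_unbounded {κ : Cardinal.{0}} (hreg : κ.IsRegular)
    (hunc : Cardinal.aleph0 < κ) {C : Set Ordinal} (hC : IsClubBelow κ.ord C) :
    ∀ α < κ.ord, ∃ δ ∈ limPts κ.ord C, α < δ := by
  intro α hα
  set f := iterSucc C α with hf
  -- each f n is in C and below κ.ord, and f is strictly increasing
  have key : ∀ n : ℕ, f n ∈ C ∧ f n < κ.ord ∧
      (∀ m < n, f m < f n) ∧ α < f n := by
    intro n
    induction n with
    | zero =>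
      obtain ⟨h1, h2⟩ := clubSucc_mem hC hα
      exact ⟨h1, hC.1 h1, by omega, h2⟩
    | succ n ih =>
      obtain ⟨h1, h2, h3, h4⟩ := ih
      obtain ⟨g1, g2⟩ := clubSucc_mem hC h2
      refine ⟨g1, hC.1 g1, ?_, h4.trans g2⟩
      intro m hm
      rcases Nat.lt_succ_iff_lt_or_eq.1 hm with hm' | hm'
      · exact (h3 m hm').trans g2
      · exact hm' ▸ g2
  set δ := iSup f with hδ
  have hδκ : δ < κ.ord :=
    Cardinal.iSup_lt_ord_of_isRegular hreg (by simpa using hunc) fun n => (key n).2.1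
  have hlef : ∀ n, f n ≤ δ := fun n => Ordinal.le_iSup f n
  have hfδ : ∀ n, f n < δ := fun n =>
    lt_of_lt_of_le ((key (n + 1)).2.2.1 n (Nat.lt_succ_self n)) (hlef (n + 1))
  have hαδ : α < δ := (key 0).2.2.2.trans_le (hlef 0)
  refine ⟨δ, ⟨hδκ, (zero_le (a := α)).trans_lt hαδ, ?_⟩, hαδ⟩
  apply le_antisymm
  · -- δ ≤ sSup (C ∩ Iio δ)
    rw [hδ, Ordinal.iSup_le_iff]
    intro n
    have hmem : f n ∈ C ∩ Set.Iio δ := ⟨(key n).1, hfδ n⟩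
    exact le_csSup ⟨δ, fun b hb => hb.2.le⟩ hmem
  · exact csSup_le ⟨f 0, (key 0).1, hfδ 0⟩ fun b hb => hb.2.le

/-- **Lemma.** Let κ be regular uncountable, `C` a club in κ, and let
`χ : κ → {−1, +1}` take the value `−1` at `α` exactly when `δ ≤ α < succ_C δ` for some
limit point `δ` of `C`, and `+1` otherwise.  Then χ is constant on each interval
`[δ, succ_C δ)` for `δ ∈ C`, but is not constant on any interval
`[δ, succ_{lim C} δ)` for `δ ∈ lim C`. -/
theorem chi_lemma (κ : Cardinal.{0}) (hreg : κ.IsRegular)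
    (hunc : Cardinal.aleph0 < κ)
    (C : Set Ordinal) (hC : IsClubBelow κ.ord C)
    (χ : Ordinal → ℤ)
    (hneg : ∀ α : Ordinal,
      (∃ δ ∈ limPts κ.ord C, δ ≤ α ∧ α < clubSucc C δ) → χ α = -1)
    (hpos : ∀ α : Ordinal,
      (¬ ∃ δ ∈ limPts κ.ord C, δ ≤ α ∧ α < clubSucc C δ) → χ α = 1) :
    (∀ δ ∈ C, ConstOn χ δ (clubSucc C δ)) ∧
    (∀ δ ∈ limPts κ.ord C, ¬ ConstOn χ δ (clubSucc (limPts κ.ord C) δ)) := by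
  have hlimC := limPts_subset hC
  constructor
  · -- part (i)
    intro δ hδ ξ η hξ1 hξ2 hη1 hη2
    have hδκ : δ < κ.ord := hC.1 hδ
    -- for α in [δ, succ δ), the negative condition holds iff δ is a limit point
    have hiff : ∀ α, δ ≤ α → α < clubSucc C δ →
        ((∃ δ' ∈ limPts κ.ord C, δ' ≤ α ∧ α < clubSucc C δ') ↔ δ ∈ limPts κ.ord C) := by
      intro α h1 h2
      constructor
      · rintro ⟨δ', hδ', h3, h4⟩
        rcases lt_trichotomy δ' δ with h | h | h
        · exact absurd ((clubSucc_le hδ h).trans h1) (not_le.2 h4)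
        · exact h ▸ hδ'
        · exact absurd ((clubSucc_le (hlimC hδ') h).trans h3) (not_le.2 h2)
      · intro h
        exact ⟨δ, h, h1, h2⟩
    by_cases h : δ ∈ limPts κ.ord C
    · rw [hneg ξ ((hiff ξ hξ1 hξ2).2 h), hneg η ((hiff η hη1 hη2).2 h)]
    · rw [hpos ξ (fun hc => h ((hiff ξ hξ1 hξ2).1 hc)),
        hpos η (fun hc => h ((hiff η hη1 hη2).1 hc))]
  · -- part (ii)
    intro δ hδ hconst
    have hδκ : δ < κ.ord := hδ.1
    have hδC : δ ∈ C := hlimC hδ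
    obtain ⟨hsC, hsδ⟩ := clubSucc_mem hC hδκ
    set α := clubSucc C δ with hα
    -- the lim-successor of δ
    have hLmem : clubSucc (limPts κ.ord C) δ ∈ limPts κ.ord C ∧
        δ < clubSucc (limPts κ.ord C) δ := by
      have hne : {β | β ∈ limPts κ.ord C ∧ δ < β}.Nonempty := by
        obtain ⟨β, hβ, hβ'⟩ := limPts_unbounded hreg hunc hC δ hδκ
        exact ⟨β, hβ, hβ'⟩
      exact csInf_mem hne
    set L := clubSucc (limPts κ.ord C) δ with hL
    obtain ⟨⟨hLκ, hL0, hLs⟩, hδL⟩ := hLmem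
    -- α < L : there is an element of C strictly between δ and L
    have hαL : α < L := by
      have hne : (C ∩ Set.Iio L).Nonempty := by
        by_contra h
        rw [Set.not_nonempty_iff_eq_empty] at h
        rw [h, csSup_empty] at hLs
        exact hL0.ne' hLs
      have : ∃ β ∈ C ∩ Set.Iio L, δ < β := by
        by_contra h
        push_neg at h
        have : sSup (C ∩ Set.Iio L) ≤ δ := csSup_le hne fun b hb => h b hb
        exact absurd (hLs ▸ this) (not_le.2 hδL)
      obtain ⟨β, ⟨hβC, hβL⟩, hδβ⟩ := this
      exact lt_of_le_of_lt (clubSucc_le hβC hδβ) hβL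
    -- α is not a limit point
    have hαnot : α ∉ limPts κ.ord C := by
      rintro ⟨-, -, hs⟩
      have hsup : sSup (C ∩ Set.Iio α) ≤ δ := by
        refine csSup_le ⟨δ, hδC, hsδ⟩ ?_
        rintro b ⟨hbC, hbα⟩
        by_contra hb
        exact absurd (clubSucc_le hbC (not_le.1 hb)) (not_le.2 hbα)
      exact absurd (hs ▸ hsup) (not_le.2 hsδ)
    -- χ α = 1
    have hχα : χ α = 1 := by
      apply hpos
      rintro ⟨δ', hδ', h1, h2⟩
      rcases lt_or_eq_of_le h1 with h | h
      · exact absurd (clubSucc_le hsC h) (not_le.2 h2)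
      · exact hαnot (h ▸ hδ')
    -- χ δ = -1
    have hχδ : χ δ = -1 := by
      apply hneg
      exact ⟨δ, hδ, le_refl δ, hsδ⟩
    have := hconst δ α (le_refl δ) (hsδ.trans hαL) hsδ.le hαL
    rw [hχδ, hχα] at this
    norm_num at this
end
end

section
/- Let κ be a regular uncountable cardinal and let θ be an infinite cardinal with θ < κ. Suppose (C_η)_{η<θ} are clubs in κ and (f_η)_{η<θ} are functions κ → {−1, +1} such that: (a) for all ξ < η < θ, C_η ⊆* C_ξ; and (b) for all ξ < η < θ there exists ε < κ such that for every δ ∈ C_ξ with δ ≥ ε, the product function f_ξ · f_η is constant on the interval [δ, succ_{C_ξ}(δ)). Then there exists a function f : κ → {−1, +1} such that for every ξ < θ there exists ε < κ such that for every δ ∈ C_ξ with δ ≥ ε, the function f_ξ · f is constant on the interval [δ, succ_{C_ξ}(δ)). -/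
noncomputable section

/-- A club in (the ordinal) `o`: a closed unbounded subset of `o`. -/
def IsClubOrd (o : Ordinal) (C : Set Ordinal) : Prop :=
  C ⊆ Set.Iio o ∧
  (∀ s ⊆ C, s.Nonempty → sSup s < o → sSup s ∈ C) ∧
  (∀ α < o, ∃ β ∈ C, α < β)

/-- `A ⊆* B` (mod < κ) for sets of ordinals: the cardinality of `A \ B` is `< κ`. -/
def AlmostSub (κ : Cardinal.{0}) (A B : Set Ordinal) : Prop :=
  Cardinal.mk ↥(A \ B) < Cardinal.lift.{1, 0} κ

namespace LSSaux

/-- basic facts about clubSucc for a club -/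
lemma clubSucc_spec {o : Ordinal} {C : Set Ordinal} (hC : IsClubOrd o C) {α : Ordinal}
    (hα : α < o) : clubSucc C α ∈ C ∧ α < clubSucc C α ∧ clubSucc C α < o := by
  obtain ⟨β, hβC, hβ⟩ := hC.2.2 α hα
  have hne : {γ | γ ∈ C ∧ α < γ}.Nonempty := ⟨β, hβC, hβ⟩
  have hmem := csInf_mem hne
  exact ⟨hmem.1, hmem.2, hC.1 hmem.1⟩

lemma clubSucc_le {C : Set Ordinal} {α β : Ordinal} (hβ : β ∈ C) (h : α < β) :
    clubSucc C α ≤ β :=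
  csInf_le (OrderBot.bddBelow _) ⟨hβ, h⟩

/-- sSup of C ∩ Iic ι -/
lemma sSup_inter_Iic {o : Ordinal} {C : Set Ordinal} (hC : IsClubOrd o C) {ι c : Ordinal}
    (hc : c ∈ C) (hcι : c ≤ ι) (hι : ι < o) :
    sSup (C ∩ Set.Iic ι) ∈ C ∧ c ≤ sSup (C ∩ Set.Iic ι) ∧ sSup (C ∩ Set.Iic ι) ≤ ι ∧
      ι < clubSucc C (sSup (C ∩ Set.Iic ι)) := by
  have hne : (C ∩ Set.Iic ι).Nonempty := ⟨c, hc, hcι⟩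
  have hbdd : BddAbove (C ∩ Set.Iic ι) := ⟨ι, fun x hx => hx.2⟩
  have hle : sSup (C ∩ Set.Iic ι) ≤ ι := csSup_le hne fun x hx => hx.2
  have hmem : sSup (C ∩ Set.Iic ι) ∈ C :=
    hC.2.1 _ Set.inter_subset_left hne (lt_of_le_of_lt hle hι)
  refine ⟨hmem, le_csSup hbdd ⟨hc, hcι⟩, hle, ?_⟩
  by_contra h
  push_neg at h
  have hspec := clubSucc_spec hC (lt_of_le_of_lt hle hι)
  exact absurd (le_csSup hbdd ⟨hspec.1, h⟩) (not_le.mpr hspec.2.1)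

lemma le_sSup_inter_Iic {C : Set Ordinal} {ι x : Ordinal} (hx : x ∈ C) (hxι : x ≤ ι) :
    x ≤ sSup (C ∩ Set.Iic ι) :=
  le_csSup ⟨ι, fun y hy => hy.2⟩ ⟨hx, hxι⟩

/-- a subset of Iio κ.ord of size < κ is bounded, κ regular -/
lemma bounded_of_mk_lt {κ : Cardinal.{0}} (hreg : κ.IsRegular) {A : Set Ordinal}
    (hA : A ⊆ Set.Iio κ.ord) (hmk : Cardinal.mk ↥A < Cardinal.lift.{1, 0} κ) :
    ∃ b < κ.ord, ∀ x ∈ A, x < b := by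
  set o := κ.ord with ho
  let e := Ordinal.ToType.mk (o := o)
  let A' : Set o.ToType := {x | ((e.symm x : Set.Iio o) : Ordinal) ∈ A}
  have hequiv : ↥A ≃ ↥A' :=
    { toFun := fun a => ⟨e ⟨a.1, hA a.2⟩, by simp [A', a.2]⟩
      invFun := fun x => ⟨((e.symm x.1 : Set.Iio o) : Ordinal), x.2⟩
      left_inv := fun a => by simp
      right_inv := fun x => by simp }
  have hmk' : Cardinal.mk ↥A' < κ := by
    have h1 : Cardinal.lift.{0} (Cardinal.mk ↥A) = Cardinal.lift.{1} (Cardinal.mk ↥A') :=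
      Cardinal.lift_mk_eq'.mpr ⟨hequiv⟩
    rw [Cardinal.lift_id'] at h1
    rw [h1] at hmk
    exact Cardinal.lift_lt.mp hmk
  set b := iSup (fun x : ↥A' => ((e.symm x.1 : Set.Iio o) : Ordinal)) with hb
  have hsup : b < o := by
    apply Ordinal.iSup_lt_ord
    · rwa [hreg.cof_eq]
    · exact fun x => (e.symm x.1).2
  refine ⟨b + 1, ?_, ?_⟩
  · rw [Ordinal.add_one_eq_succ]
    exact (Cardinal.isSuccLimit_ord hreg.aleph0_le).succ_lt hsup
  · intro x hx
    have hmem : e ⟨x, hA hx⟩ ∈ A' := by simp [A', hx]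
    have := Ordinal.le_iSup (fun x : ↥A' => ((e.symm x.1 : Set.Iio o) : Ordinal)) ⟨_, hmem⟩
    simp only at this
    calc x = ((e.symm (e ⟨x, hA hx⟩) : Set.Iio o) : Ordinal) := by simp
    _ ≤ _ := this
    _ < _ + 1 := lt_add_one _

end LSSaux

/-- **Lemma (limit stage, small cofinality).** Let κ be regular uncountable and θ an
infinite cardinal with θ < κ.  Given clubs `C_η` (η < θ) in κ that ⊆*-decrease, and
functions `f_η : κ → {−1,+1}` that pairwise eventually agree up to a constant on the
intervals of the corresponding clubs, there is a single `f : κ → {−1,+1}` such that for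
each η < θ, `f_η ⬝ f` is eventually constant on the intervals of `C_η`. -/
theorem limit_stage_small (κ θ : Cardinal.{0}) (hreg : κ.IsRegular)
    (hunc : Cardinal.aleph0 < κ)
    (hθinf : Cardinal.aleph0 ≤ θ) (hθκ : θ < κ)
    (C : Ordinal → Set Ordinal) (f : Ordinal → Ordinal → ℤ)
    (hclub : ∀ η < θ.ord, IsClubOrd κ.ord (C η))
    (hval : ∀ η < θ.ord, ∀ ξ : Ordinal, f η ξ = 1 ∨ f η ξ = -1)
    (hdec : ∀ ξ η : Ordinal, ξ < η → η < θ.ord → AlmostSub κ (C η) (C ξ))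
    (hcoh : ∀ ξ η : Ordinal, ξ < η → η < θ.ord → ∃ ε < κ.ord, ∀ δ ∈ C ξ, ε ≤ δ →
      ConstOn (fun ι => f ξ ι * f η ι) δ (clubSucc (C ξ) δ)) :
    ∃ g : Ordinal → ℤ, (∀ ξ : Ordinal, g ξ = 1 ∨ g ξ = -1) ∧
      ∀ ξ < θ.ord, ∃ ε < κ.ord, ∀ δ ∈ C ξ, ε ≤ δ →
        ConstOn (fun ι => f ξ ι * g ι) δ (clubSucc (C ξ) δ) := by
  classical
  set o := κ.ord with ho
  set Θ := θ.ord with hΘdef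
  have hlim : Order.IsSuccLimit o := Cardinal.isSuccLimit_ord hreg.aleph0_le
  have hΘlim : Order.IsSuccLimit Θ := Cardinal.isSuccLimit_ord hθinf
  have hΘpos : 0 < Θ := hΘlim.pos
  have hcof : o.cof = κ := hreg.cof_eq
  -- enumeration of Iio Θ by a Type-0 type
  let en : Θ.ToType → Ordinal := fun i => ((Ordinal.ToType.mk (o := Θ)).symm i : Ordinal)
  have hen_lt : ∀ i, en i < Θ := fun i => ((Ordinal.ToType.mk (o := Θ)).symm i).2
  have hen_surj : ∀ ξ, ξ < Θ → ∃ i, en i = ξ := fun ξ hξ =>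
    ⟨Ordinal.ToType.mk (o := Θ) ⟨ξ, hξ⟩, by simp [en]⟩
  have hmkT : Cardinal.mk Θ.ToType = θ := by rw [Cardinal.mk_toType, Cardinal.card_ord]
  -- choose coherence thresholds and boundedness witnesses
  choose! E hE1 hE2 using hcoh
  have hBex : ∀ ξ η : Ordinal, ξ < η → η < Θ → ∃ b, b < o ∧ ∀ x ∈ C η \ C ξ, x < b := by
    intro ξ η h1 h2
    obtain ⟨b, hb1, hb2⟩ := LSSaux.bounded_of_mk_lt hreg
      (fun x hx => (hclub η h2).1 hx.1) (hdec ξ η h1 h2)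
    exact ⟨b, hb1, hb2⟩
  choose! B hB1 hB2 using hBex
  -- uniform threshold εstar
  let F : Θ.ToType × Θ.ToType → Ordinal := fun p =>
    if en p.1 < en p.2 then max (E (en p.1) (en p.2)) (B (en p.1) (en p.2)) else 0
  have hFlt : ∀ p, F p < o := by
    intro p
    by_cases h : en p.1 < en p.2
    · simp only [F, if_pos h]
      exact max_lt (hE1 _ _ h (hen_lt _)) (hB1 _ _ h (hen_lt _))
    · simp only [F, if_neg h]; exact hlim.pos
  set εstar := iSup F with hεstardef
  have hεstarlt : εstar < o := by
    apply Ordinal.iSup_lt_ord _ hFlt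
    rw [hcof]
    simp only [Cardinal.mk_prod, Cardinal.lift_id]
    rw [hmkT, Cardinal.mul_eq_self hθinf]
    exact hθκ
  have hEle : ∀ ξ η, ξ < η → η < Θ → E ξ η ≤ εstar ∧ B ξ η ≤ εstar := by
    intro ξ η h1 h2
    obtain ⟨i, hi⟩ := hen_surj ξ (h1.trans h2)
    obtain ⟨j, hj⟩ := hen_surj η h2
    have hFij : F (i, j) = max (E ξ η) (B ξ η) := by
      simp only [F]; rw [hi, hj, if_pos h1]
    have hle := Ordinal.le_iSup F (i, j)
    rw [hFij] at hle
    exact ⟨le_trans (le_max_left _ _) hle, le_trans (le_max_right _ _) hle⟩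
  have hP1 : ∀ ξ η, ξ ≤ η → η < Θ → ∀ x ∈ C η, εstar ≤ x → x ∈ C ξ := by
    intro ξ η hle hη x hx hεx
    rcases eq_or_lt_of_le hle with rfl | hlt
    · exact hx
    · by_contra hxC
      exact absurd (hB2 ξ η hlt hη x ⟨hx, hxC⟩)
        (not_lt.mpr (le_trans (hEle ξ η hlt hη).2 hεx))
  have hP2 : ∀ ξ η, ξ < η → η < Θ → ∀ δ ∈ C ξ, εstar ≤ δ →
      ConstOn (fun ι => f ξ ι * f η ι) δ (clubSucc (C ξ) δ) := by
    intro ξ η h1 h2 δ hδ hεδ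
    exact hE2 ξ η h1 h2 δ hδ (le_trans (hEle ξ η h1 h2).1 hεδ)
  -- threshold ε0
  let G : Θ.ToType → Ordinal := fun i => clubSucc (C (en i)) εstar
  have hGlt : ∀ i, G i < o := fun i =>
    (LSSaux.clubSucc_spec (hclub _ (hen_lt i)) hεstarlt).2.2
  have hsupG : iSup G < o := by
    apply Ordinal.iSup_lt_ord _ hGlt
    rw [hcof, hmkT]; exact hθκ
  set ε0 := max εstar (iSup G) + 1 with hε0def
  have hmaxlt : max εstar (iSup G) < ε0 := by
    rw [hε0def, Ordinal.add_one_eq_succ]; exact Order.lt_succ _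
  have hε0lt : ε0 < o := by
    rw [hε0def, Ordinal.add_one_eq_succ]
    exact hlim.succ_lt (max_lt hεstarlt hsupG)
  have hεstar_ε0 : εstar < ε0 := (le_max_left _ _).trans_lt hmaxlt
  have hG_ε0 : ∀ η, η < Θ → clubSucc (C η) εstar < ε0 := by
    intro η hη
    obtain ⟨i, hi⟩ := hen_surj η hη
    have hle := Ordinal.le_iSup G i
    rw [show G i = clubSucc (C η) εstar by simp only [G]; rw [hi]] at hle
    exact hle.trans_lt ((le_max_right _ _).trans_lt hmaxlt)
  -- the "last club point below ι" function
  set δf : Ordinal → Ordinal → Ordinal := fun η ι => sSup (C η ∩ Set.Iic ι) with hδfdef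
  have hδ : ∀ η, η < Θ → ∀ ι, ε0 ≤ ι → ι < o →
      δf η ι ∈ C η ∧ εstar < δf η ι ∧ δf η ι ≤ ι ∧ ι < clubSucc (C η) (δf η ι) := by
    intro η hη ι hι1 hι2
    have hc := LSSaux.clubSucc_spec (hclub η hη) hεstarlt
    have hcι : clubSucc (C η) εstar ≤ ι := le_trans (le_of_lt (hG_ε0 η hη)) hι1
    obtain ⟨h1, h2, h3, h4⟩ := LSSaux.sSup_inter_Iic (hclub η hη) hc.1 hcι hι2
    exact ⟨h1, lt_of_lt_of_le hc.2.1 h2, h3, h4⟩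
  have hδmax : ∀ η ι x, x ∈ C η → x ≤ ι → x ≤ δf η ι := fun η ι x hx hxι =>
    LSSaux.le_sSup_inter_Iic hx hxι
  have hmono : ∀ ξ j, ξ ≤ j → j < Θ → ∀ ι, ε0 ≤ ι → ι < o → δf j ι ≤ δf ξ ι := by
    intro ξ j h1 h2 ι hι1 hι2
    obtain ⟨hm, hst, hle, _⟩ := hδ j h2 ι hι1 hι2
    exact hδmax ξ ι _ (hP1 ξ j h1 h2 _ hm (le_of_lt hst)) hle
  -- points of a common interval have the same δf-history
  have hsame : ∀ ξ, ξ < Θ → ∀ d, d ∈ C ξ → ε0 ≤ d → ∀ ι ι', d ≤ ι → ι < clubSucc (C ξ) d →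
      d ≤ ι' → ι' < clubSucc (C ξ) d → ∀ j, ξ ≤ j → j < Θ → δf j ι = δf j ι' := by
    intro ξ hξ d hd hε0d
    have hdo : d < o := (hclub ξ hξ).1 hd
    have hsucco : clubSucc (C ξ) d < o := (LSSaux.clubSucc_spec (hclub ξ hξ) hdo).2.2
    have aux : ∀ ι ι', ι ≤ ι' → d ≤ ι → ι < clubSucc (C ξ) d → ι' < clubSucc (C ξ) d →
        ∀ j, ξ ≤ j → j < Θ → δf j ι = δf j ι' := by
      intro ι ι' hle hdι hιs hι's j hj1 hj2
      have hιo : ι < o := hιs.trans hsucco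
      have hι'o : ι' < o := hι's.trans hsucco
      have hι0 : ε0 ≤ ι := hε0d.trans hdι
      have hι'0 : ε0 ≤ ι' := hι0.trans hle
      obtain ⟨hm, hst, hlei, _⟩ := hδ j hj2 ι hι0 hιo
      obtain ⟨hm', hst', hlei', _⟩ := hδ j hj2 ι' hι'0 hι'o
      apply le_antisymm
      · exact csSup_le_csSup ⟨ι', fun x hx => hx.2⟩ ⟨δf j ι, hm, hlei⟩
          (Set.inter_subset_inter_right _ (Set.Iic_subset_Iic.mpr hle))
      · have hCξ : δf j ι' ∈ C ξ := hP1 ξ j hj1 hj2 _ hm' (le_of_lt hst')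
        have hled : δf j ι' ≤ d := by
          by_contra h
          push_neg at h
          exact absurd ((LSSaux.clubSucc_le hCξ h).trans hlei') (not_le.mpr hι's)
        exact hδmax j ι _ hm' (hled.trans hdι)
    intro ι ι' h1 h2 h3 h4 j hj1 hj2
    rcases le_total ι ι' with h | h
    · exact aux ι ι' h h1 h2 h4 j hj1 hj2
    · exact (aux ι' ι h h3 h4 h2 j hj1 hj2).symm
  -- stabilization of the δf-history
  have hstab : ∀ ι, ∃ mm, mm < Θ ∧ (ε0 ≤ ι → ι < o →
      ∀ j, mm ≤ j → j < Θ → δf j ι = δf mm ι) := by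
    intro ι
    by_cases h : ε0 ≤ ι ∧ ι < o
    · have hW : {α | ∃ η, η < Θ ∧ δf η ι = α}.Nonempty := ⟨δf 0 ι, 0, hΘpos, rfl⟩
      obtain ⟨ηm, hηm, hηmval⟩ := csInf_mem hW
      refine ⟨ηm, hηm, fun _ _ j hj1 hj2 => ?_⟩
      refine le_antisymm (hmono ηm j hj1 hj2 ι h.1 h.2) ?_
      rw [hηmval]
      exact csInf_le (OrderBot.bddBelow _) ⟨j, hj2, rfl⟩
    · exact ⟨0, hΘpos, fun h1 h2 => absurd ⟨h1, h2⟩ h⟩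
  choose m hmΘ hmst using hstab
  -- the function g
  set g : Ordinal → ℤ := fun ι =>
    if ε0 ≤ ι ∧ ι < o then f (m ι) ι * f (m ι) (δf (m ι) ι) else 1 with hgdef0
  have hgdef : ∀ ι, ε0 ≤ ι → ι < o → g ι = f (m ι) ι * f (m ι) (δf (m ι) ι) := by
    intro ι h1 h2; simp only [hgdef0, if_pos (And.intro h1 h2)]
  have hgval : ∀ ι, g ι = 1 ∨ g ι = -1 := by
    intro ι
    by_cases h : ε0 ≤ ι ∧ ι < o
    · rw [hgdef ι h.1 h.2]
      rcases hval (m ι) (hmΘ ι) ι with h1 | h1 <;>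
        rcases hval (m ι) (hmΘ ι) (δf (m ι) ι) with h2 | h2 <;> rw [h1, h2] <;> norm_num
    · left; simp only [hgdef0, if_neg h]
  -- unwinding claim
  have hA : ∀ ι, ε0 ≤ ι → ι < o → ∀ M, m ι < M → M < Θ →
      f M ι * g ι = f M (δf (m ι) ι) := by
    intro ι h1 h2 M hM1 hM2
    obtain ⟨hm1, hm2, hm3, hm4⟩ := hδ (m ι) (hmΘ ι) ι h1 h2
    have hconst := hP2 (m ι) M hM1 hM2 (δf (m ι) ι) hm1 (le_of_lt hm2)
    have heq : f (m ι) ι * f M ι = f (m ι) (δf (m ι) ι) * f M (δf (m ι) ι) :=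
      hconst ι (δf (m ι) ι) hm3 hm4 le_rfl (lt_of_le_of_lt hm3 hm4)
    rw [hgdef ι h1 h2]
    rcases hval (m ι) (hmΘ ι) ι with u1 | u1 <;>
      rcases hval (m ι) (hmΘ ι) (δf (m ι) ι) with u2 | u2 <;>
      rcases hval M hM2 ι with u3 | u3 <;>
      rcases hval M hM2 (δf (m ι) ι) with u4 | u4 <;>
      simp [u1, u2, u3, u4] at heq ⊢
  -- the key property of g on intervals of each C η
  have H1 : ∀ η, η < Θ → ∀ d, d ∈ C η → ε0 ≤ d →
      ConstOn (fun ι => f η ι * g ι) d (clubSucc (C η) d) := by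
    intro η hη d hd hε0d ι ι' hι1 hι2 hι'1 hι'2
    have hdo : d < o := (hclub η hη).1 hd
    have hso : clubSucc (C η) d < o := (LSSaux.clubSucc_spec (hclub η hη) hdo).2.2
    have hιo : ι < o := hι2.trans hso
    have hι'o : ι' < o := hι'2.trans hso
    have hι0 : ε0 ≤ ι := hε0d.trans hι1
    have hι'0 : ε0 ≤ ι' := hε0d.trans hι'1
    set M := max η (max (m ι) (m ι')) + 1 with hMdef
    have hltM : max η (max (m ι) (m ι')) < M := by
      rw [hMdef, Ordinal.add_one_eq_succ]; exact Order.lt_succ _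
    have hMΘ : M < Θ := by
      rw [hMdef, Ordinal.add_one_eq_succ]
      exact hΘlim.succ_lt (max_lt hη (max_lt (hmΘ ι) (hmΘ ι')))
    have hηM : η < M := (le_max_left _ _).trans_lt hltM
    have hmιM : m ι < M := ((le_max_left _ _).trans (le_max_right _ _)).trans_lt hltM
    have hmι'M : m ι' < M := ((le_max_right _ _).trans (le_max_right _ _)).trans_lt hltM
    have hδeq : δf (m ι) ι = δf (m ι') ι' := by
      have e1 := hmst ι hι0 hιo M (le_of_lt hmιM) hMΘ
      have e2 := hsame η hη d hd hε0d ι ι' hι1 hι2 hι'1 hι'2 M (le_of_lt hηM) hMΘ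
      have e3 := hmst ι' hι'0 hι'o M (le_of_lt hmι'M) hMΘ
      rw [← e1, e2, e3]
    have hAι := hA ι hι0 hιo M hmιM hMΘ
    have hAι' := hA ι' hι'0 hι'o M hmι'M hMΘ
    rw [← hδeq] at hAι'
    have hgι : g ι = f M ι * f M (δf (m ι) ι) := by
      rcases hval M hMΘ ι with u | u <;> rw [u] at hAι ⊢ <;> linarith
    have hgι' : g ι' = f M ι' * f M (δf (m ι) ι) := by
      rcases hval M hMΘ ι' with u | u <;> rw [u] at hAι' ⊢ <;> linarith
    have hc : f η ι * f M ι = f η ι' * f M ι' :=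
      hP2 η M hηM hMΘ d hd (le_of_lt (hεstar_ε0.trans_le hε0d)) ι ι' hι1 hι2 hι'1 hι'2
    show f η ι * g ι = f η ι' * g ι'
    rw [hgι, hgι', ← mul_assoc, ← mul_assoc, hc]
  -- conclusion
  refine ⟨g, hgval, ?_⟩
  intro ξ hξ
  set η := ξ + 1 with hηdef
  have hξη : ξ < η := by rw [hηdef, Ordinal.add_one_eq_succ]; exact Order.lt_succ _
  have hηΘ : η < Θ := by rw [hηdef, Ordinal.add_one_eq_succ]; exact hΘlim.succ_lt hξ
  have hcs : clubSucc (C η) ε0 < o := (LSSaux.clubSucc_spec (hclub η hηΘ) hε0lt).2.2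
  refine ⟨max ε0 (clubSucc (C η) ε0) + 1, ?_, ?_⟩
  · rw [Ordinal.add_one_eq_succ]; exact hlim.succ_lt (max_lt hε0lt hcs)
  intro δ hδmem hεδ
  have hmaxδ : max ε0 (clubSucc (C η) ε0) < δ := by
    refine lt_of_lt_of_le ?_ hεδ
    rw [Ordinal.add_one_eq_succ]; exact Order.lt_succ _
  have hε0δ : ε0 ≤ δ := le_of_lt ((le_max_left _ _).trans_lt hmaxδ)
  have hδo : δ < o := (hclub ξ hξ).1 hδmem
  obtain ⟨hd1, hd2, hd3, hd4⟩ := hδ η hηΘ δ hε0δ hδo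
  have hε0d : ε0 ≤ δf η δ := by
    have hcspec := LSSaux.clubSucc_spec (hclub η hηΘ) hε0lt
    have hle := hδmax η δ _ hcspec.1 (le_of_lt ((le_max_right _ _).trans_lt hmaxδ))
    exact le_trans (le_of_lt hcspec.2.1) hle
  have hsucc_mem := LSSaux.clubSucc_spec (hclub η hηΘ) ((hclub η hηΘ).1 hd1)
  have hsle : clubSucc (C ξ) δ ≤ clubSucc (C η) (δf η δ) := by
    refine LSSaux.clubSucc_le ?_ hd4
    exact hP1 ξ η (le_of_lt hξη) hηΘ _ hsucc_mem.1
      (le_of_lt ((hεstar_ε0.trans_le hε0δ).trans hd4))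
  have hH1 := H1 η hηΘ (δf η δ) hd1 hε0d
  intro ι ι' h1 h2 h3 h4
  have hc : f ξ ι * f η ι = f ξ ι' * f η ι' :=
    hP2 ξ η hξη hηΘ δ hδmem (le_of_lt (hεstar_ε0.trans_le hε0δ)) ι ι' h1 h2 h3 h4
  have hg : f η ι * g ι = f η ι' * g ι' :=
    hH1 ι ι' (hd3.trans h1) (lt_of_lt_of_le h2 hsle) (hd3.trans h3) (lt_of_lt_of_le h4 hsle)
  show f ξ ι * g ι = f ξ ι' * g ι'
  have key : (f ξ ι * f η ι) * (f η ι * g ι) = (f ξ ι' * f η ι') * (f η ι' * g ι') := by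
    rw [hc, hg]
  rcases hval η hηΘ ι with u | u <;> rcases hval η hηΘ ι' with u' | u' <;>
    rw [u, u'] at key <;> linear_combination key
end
end

section
/- Let κ be a regular uncountable cardinal. Suppose (C_η)_{η<κ} are clubs in κ and (f_η)_{η<κ} are functions κ → {−1, +1} such that: (a) for all ξ < η < κ, C_η ⊆* C_ξ; and (b) for all ξ < η < κ there exists ε < κ such that for every δ ∈ C_ξ with δ ≥ ε, the product function f_ξ · f_η is constant on the interval [δ, succ_{C_ξ}(δ)). Then there exists a function f : κ → {−1, +1} such that for every ξ < κ there exists ε < κ such that for every δ ∈ C_ξ with δ ≥ ε, the function f_ξ · f is constant on the interval [δ, succ_{C_ξ}(δ)). -/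
noncomputable section

/-- A club in (the ordinal) `o`: a closed unbounded subset of `o`. -/
def IsClubIn (o : Ordinal) (C : Set Ordinal) : Prop :=
  C ⊆ Set.Iio o ∧
  (∀ s ⊆ C, s.Nonempty → sSup s < o → sSup s ∈ C) ∧
  (∀ α < o, ∃ β ∈ C, α < β)

/-- **Lemma (limit stage, cofinality κ).** Let κ be regular uncountable.  Given clubs
`C_η` (η < κ) in κ that ⊆*-decrease, and functions `f_η : κ → {−1,+1}` that pairwise
eventually agree up to a constant on the intervals of the corresponding clubs, there is a
single `f : κ → {−1,+1}` such that for each η < κ, `f_η ⬝ f` is eventually constant on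
the intervals of `C_η`. -/
theorem limit_stage_kappa (κ : Cardinal.{0}) (hreg : κ.IsRegular)
    (hunc : Cardinal.aleph0 < κ)
    (C : Ordinal → Set Ordinal) (f : Ordinal → Ordinal → ℤ)
    (hclub : ∀ η < κ.ord, IsClubIn κ.ord (C η))
    (hval : ∀ η < κ.ord, ∀ ξ : Ordinal, f η ξ = 1 ∨ f η ξ = -1)
    (hdec : ∀ ξ η : Ordinal, ξ < η → η < κ.ord → AlmostSub κ (C η) (C ξ))
    (hcoh : ∀ ξ η : Ordinal, ξ < η → η < κ.ord → ∃ ε < κ.ord, ∀ δ ∈ C ξ, ε ≤ δ →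
      ConstOn (fun ι => f ξ ι * f η ι) δ (clubSucc (C ξ) δ)) :
    ∃ g : Ordinal → ℤ, (∀ ξ : Ordinal, g ξ = 1 ∨ g ξ = -1) ∧
      ∀ ξ < κ.ord, ∃ ε < κ.ord, ∀ δ ∈ C ξ, ε ≤ δ →
        ConstOn (fun ι => f ξ ι * g ι) δ (clubSucc (C ξ) δ) := by
  classical
  set Λ := κ.ord with hΛdef
  have hΛlim : Order.IsSuccLimit Λ := Cardinal.isSuccLimit_ord hreg.aleph0_le
  have hcf : Λ.cof = κ := hreg.cof_eq
  -- choose coherence witnesses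
  have hcoh' : ∀ ξ η : Ordinal, ∃ e : Ordinal, ξ < η → η < Λ →
      e < Λ ∧ ∀ δ ∈ C ξ, e ≤ δ → ConstOn (fun ι => f ξ ι * f η ι) δ (clubSucc (C ξ) δ) := by
    intro ξ η
    by_cases h : ξ < η ∧ η < Λ
    · obtain ⟨e, heΛ, hP⟩ := hcoh ξ η h.1 h.2
      exact ⟨e, fun _ _ => ⟨heΛ, hP⟩⟩
    · exact ⟨0, fun h1 h2 => absurd ⟨h1, h2⟩ h⟩
  choose ε hε using hcoh'
  -- choose club points
  have hcc' : ∀ j a : Ordinal, ∃ b : Ordinal, j < Λ → a < Λ → b ∈ C j ∧ a < b := by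
    intro j a
    by_cases h : j < Λ ∧ a < Λ
    · obtain ⟨b, hb, hab⟩ := (hclub j h.1).2.2 a h.2
      exact ⟨b, fun _ _ => ⟨hb, hab⟩⟩
    · exact ⟨0, fun h1 h2 => absurd ⟨h1, h2⟩ h⟩
  choose cc hcc using hcc'
  -- the diagonal set E
  set E : Set Ordinal := {α | 0 < α ∧ α < Λ ∧ (∀ j < α, α ∈ C j) ∧
      ∀ ξ' η' : Ordinal, ξ' < η' → η' < α → ε ξ' η' < α} with hEdef
  have hEmem : ∀ x : Ordinal, x ∈ E ↔ (0 < x ∧ x < Λ ∧ (∀ j < x, x ∈ C j) ∧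
      ∀ ξ' η' : Ordinal, ξ' < η' → η' < x → ε ξ' η' < x) := fun x => Iff.rfl
  -- E is unbounded in Λ
  have hEunb : ∀ a, a < Λ → ∃ x, x ∈ E ∧ a < x := by
    intro a haΛ
    obtain ⟨NEXT, hN1, hN2, hN3, hNlt⟩ : ∃ N : Ordinal → Ordinal,
        (∀ β, β + 1 ≤ N β) ∧
        (∀ β, Ordinal.bsup β (fun j _ => cc j β) ≤ N β) ∧
        (∀ β, Ordinal.bsup β (fun η' _ => Ordinal.bsup η' (fun ξ' _ => ε ξ' η' + 1)) ≤ N β) ∧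
        (∀ β, β < Λ → N β < Λ) := by
      refine ⟨fun β => max (max (β + 1)
        (Ordinal.bsup β (fun j _ => cc j β)))
        (Ordinal.bsup β (fun η' _ => Ordinal.bsup η' (fun ξ' _ => ε ξ' η' + 1))),
        fun β => le_max_of_le_left (le_max_left _ _),
        fun β => le_max_of_le_left (le_max_right _ _),
        fun β => le_max_right _ _, ?_⟩
      intro β hβ
      have hcard : β.card < Λ.cof := by rw [hcf]; exact Cardinal.lt_ord.1 hβ
      have h1 : β + 1 < Λ := by
        rw [Ordinal.add_one_eq_succ]; exact hΛlim.succ_lt hβ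
      have h2 : Ordinal.bsup β (fun j _ => cc j β) < Λ := by
        refine Ordinal.bsup_lt_ord hcard (fun j hj => ?_)
        exact (hclub j (hj.trans hβ)).1 ((hcc j β (hj.trans hβ) hβ).1)
      have h3 : Ordinal.bsup β (fun η' _ => Ordinal.bsup η' (fun ξ' _ => ε ξ' η' + 1)) < Λ := by
        refine Ordinal.bsup_lt_ord hcard (fun η' hη' => ?_)
        have hcard2 : η'.card < Λ.cof := by
          rw [hcf]; exact Cardinal.lt_ord.1 (hη'.trans hβ)
        refine Ordinal.bsup_lt_ord hcard2 (fun ξ' hξ' => ?_)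
        rw [Ordinal.add_one_eq_succ]
        exact hΛlim.succ_lt (hε ξ' η' hξ' (hη'.trans hβ)).1
      exact max_lt (max_lt h1 h2) h3
    obtain ⟨bs, hbs0, hbssucc⟩ : ∃ bs : ℕ → Ordinal, bs 0 = a + 1 ∧
        ∀ n, bs (n + 1) = NEXT (bs n) :=
      ⟨fun n => Nat.rec (a + 1) (fun _ ih => NEXT ih) n, rfl, fun _ => rfl⟩
    have hbsΛ : ∀ n, bs n < Λ := by
      intro n
      induction n with
      | zero => rw [hbs0, Ordinal.add_one_eq_succ]; exact hΛlim.succ_lt haΛ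
      | succ n ih => rw [hbssucc]; exact hNlt _ ih
    have hbsmono : StrictMono bs := by
      refine strictMono_nat_of_lt_succ (fun n => ?_)
      rw [hbssucc]
      calc bs n < bs n + 1 := by
            rw [Ordinal.add_one_eq_succ]; exact Order.lt_succ _
        _ ≤ NEXT (bs n) := hN1 _
    set α := ⨆ n, bs n with hα
    have hble : ∀ n, bs n ≤ α := fun n => Ordinal.le_iSup bs n
    have hαΛ : α < Λ := by
      refine Ordinal.iSup_lt_ord ?_ hbsΛ
      rw [hcf, Cardinal.mk_nat]; exact hunc
    have haα : a < α := by
      refine lt_of_lt_of_le ?_ (hble 0)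
      rw [hbs0, Ordinal.add_one_eq_succ]; exact Order.lt_succ _
    have hcofα : ∀ x, x < α → ∃ n, x < bs n := by
      intro x hx
      by_contra hcon
      push_neg at hcon
      exact absurd (Ordinal.iSup_le hcon) (not_le.2 hx)
    refine ⟨α, ?_, haα⟩
    rw [hEmem]
    refine ⟨lt_of_le_of_lt (zero_le (a := a)) haα, hαΛ, ?_, ?_⟩
    · -- α is in all earlier clubs
      intro j hj
      obtain ⟨n, hn⟩ := hcofα j hj
      have hjΛ : j < Λ := hj.trans hαΛ
      set S : Set Ordinal := {x | x ∈ C j ∧ bs n < x ∧ x ≤ α} with hS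
      have hSsub : S ⊆ C j := fun x hx => hx.1
      have hPm : ∀ m, n ≤ m → cc j (bs m) ∈ S := by
        intro m hm
        have h1 := hcc j (bs m) hjΛ (hbsΛ m)
        refine ⟨h1.1, lt_of_le_of_lt (hbsmono.monotone hm) h1.2, ?_⟩
        have h2 : cc j (bs m) ≤ Ordinal.bsup (bs m) (fun j' _ => cc j' (bs m)) :=
          Ordinal.le_bsup _ j (hn.trans_le (hbsmono.monotone hm))
        calc cc j (bs m) ≤ _ := h2
          _ ≤ NEXT (bs m) := hN2 _
          _ = bs (m + 1) := (hbssucc m).symm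
          _ ≤ α := hble _
      have hSne : S.Nonempty := ⟨cc j (bs n), hPm n le_rfl⟩
      have hSbdd : BddAbove S := ⟨α, fun x hx => hx.2.2⟩
      have hsup_eq : sSup S = α := by
        apply le_antisymm
        · exact csSup_le hSne (fun x hx => hx.2.2)
        · rw [hα]
          refine Ordinal.iSup_le (fun m => ?_)
          calc bs m ≤ bs (max m n) := hbsmono.monotone (le_max_left _ _)
            _ ≤ cc j (bs (max m n)) := (hcc j _ hjΛ (hbsΛ _)).2.le
            _ ≤ sSup S := le_csSup hSbdd (hPm _ (le_max_right _ _))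
      have hmem := (hclub j hjΛ).2.1 S hSsub hSne (hsup_eq ▸ hαΛ)
      rwa [hsup_eq] at hmem
    · intro ξ' η' hξ'η' hη'α
      obtain ⟨n, hn⟩ := hcofα η' hη'α
      have h1 : ε ξ' η' + 1 ≤ Ordinal.bsup η' (fun ξ'' _ => ε ξ'' η' + 1) :=
        Ordinal.le_bsup _ ξ' hξ'η'
      have h2 : Ordinal.bsup η' (fun ξ'' _ => ε ξ'' η' + 1) ≤
          Ordinal.bsup (bs n) (fun η'' _ => Ordinal.bsup η'' (fun ξ'' _ => ε ξ'' η'' + 1)) :=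
        Ordinal.le_bsup _ η' hn
      have h3 : ε ξ' η' < ε ξ' η' + 1 := by
        rw [Ordinal.add_one_eq_succ]; exact Order.lt_succ _
      calc ε ξ' η' < ε ξ' η' + 1 := h3
        _ ≤ _ := h1
        _ ≤ _ := h2
        _ ≤ NEXT (bs n) := hN3 _
        _ = bs (n + 1) := (hbssucc n).symm
        _ ≤ α := hble _
  -- E is closed (in the form we need)
  have hEcl : ∀ δ, δ < Λ → ∀ e, e ∈ E → e ≤ δ →
      sSup (E ∩ Set.Iic δ) ∈ E ∧ sSup (E ∩ Set.Iic δ) ≤ δ := by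
    intro δ hδΛ e heE heδ
    set s := E ∩ Set.Iic δ with hs
    have hsne : s.Nonempty := ⟨e, heE, heδ⟩
    have hsbdd : BddAbove s := ⟨δ, fun x hx => hx.2⟩
    have hble : sSup s ≤ δ := csSup_le hsne (fun x hx => hx.2)
    have hege : e ≤ sSup s := le_csSup hsbdd ⟨heE, heδ⟩
    have he0 : 0 < e := ((hEmem e).1 heE).1
    refine ⟨(hEmem _).2 ⟨lt_of_lt_of_le he0 hege, lt_of_le_of_lt hble hδΛ, ?_, ?_⟩, hble⟩
    · intro j hj
      have hjΛ : j < Λ := lt_of_lt_of_le hj (hble.trans hδΛ.le)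
      have hy : ∃ y, y ∈ s ∧ j < y := by
        by_contra hcon
        push_neg at hcon
        exact absurd (csSup_le hsne hcon) (not_le.2 hj)
      obtain ⟨y, hys, hjy⟩ := hy
      set T : Set Ordinal := {x | x ∈ E ∧ x ≤ δ ∧ j < x} with hT
      have hTsub : T ⊆ C j := fun x hx => ((hEmem x).1 hx.1).2.2.1 j hx.2.2
      have hTne : T.Nonempty := ⟨y, hys.1, hys.2, hjy⟩
      have hTbdd : BddAbove T := ⟨δ, fun x hx => hx.2.1⟩
      have hTs : sSup T = sSup s := by
        apply le_antisymm
        · exact csSup_le hTne (fun x hx => le_csSup hsbdd ⟨hx.1, hx.2.1⟩)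
        · refine csSup_le hsne (fun z hz => ?_)
          rcases le_or_gt z j with h | h
          · exact le_trans (h.trans hjy.le) (le_csSup hTbdd ⟨hys.1, hys.2, hjy⟩)
          · exact le_csSup hTbdd ⟨hz.1, hz.2, h⟩
      have hmem := (hclub j hjΛ).2.1 T hTsub hTne (hTs ▸ lt_of_le_of_lt hble hδΛ)
      rwa [hTs] at hmem
    · intro ξ' η' hξ'η' hη'
      have hy : ∃ y, y ∈ s ∧ η' < y := by
        by_contra hcon
        push_neg at hcon
        exact absurd (csSup_le hsne hcon) (not_le.2 hη')
      obtain ⟨y, hys, hη'y⟩ := hy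
      exact lt_of_lt_of_le (((hEmem y).1 hys.1).2.2.2 ξ' η' hξ'η' hη'y) (le_csSup hsbdd hys)
  -- ultrafilters containing the tails below β
  set F : Ordinal → Filter Ordinal :=
    fun β => ⨅ ζ : (Set.Iio β), Filter.principal (Set.Ico ζ.1 β) with hF
  have hFne : ∀ β : Ordinal, 0 < β → (F β).NeBot := by
    intro β hβ
    haveI : Nonempty (Set.Iio β) := ⟨⟨0, hβ⟩⟩
    refine Filter.iInf_neBot_of_directed ?_ ?_
    · intro ζ ζ'
      refine ⟨⟨max ζ.1 ζ'.1, Set.mem_Iio.2 (max_lt (Set.mem_Iio.1 ζ.2) (Set.mem_Iio.1 ζ'.2))⟩, ?_, ?_⟩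
      · exact Filter.principal_mono.2 (Set.Ico_subset_Ico_left (le_max_left _ _))
      · exact Filter.principal_mono.2 (Set.Ico_subset_Ico_left (le_max_right _ _))
    · intro ζ
      exact Filter.principal_neBot_iff.2 ⟨ζ.1, le_rfl, ζ.2⟩
  set U : Ordinal → Ultrafilter Ordinal :=
    fun β => if h : 0 < β then @Ultrafilter.of _ (F β) (hFne β h) else
      (pure 0 : Ultrafilter Ordinal) with hU
  have hUtail : ∀ β, 0 < β → ∀ ζ, ζ < β → Set.Ico ζ β ∈ U β := by
    intro β hβ ζ hζ
    have hUβ : U β = @Ultrafilter.of _ (F β) (hFne β hβ) := by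
      rw [hU]; exact dif_pos hβ
    rw [hUβ]
    have h1 : (@Ultrafilter.of _ (F β) (hFne β hβ) : Filter Ordinal) ≤ F β :=
      @Ultrafilter.of_le _ (F β) (hFne β hβ)
    have h2 : F β ≤ Filter.principal (Set.Ico ζ β) := iInf_le _ (⟨ζ, hζ⟩ : Set.Iio β)
    exact Filter.le_principal_iff.1 (h1.trans h2)
  have hUinter : ∀ (β : Ordinal) (s t : Set Ordinal), s ∈ U β → t ∈ U β → s ∩ t ∈ U β :=
    fun β s t hs ht => Filter.inter_mem hs ht
  have hUmono : ∀ (β : Ordinal) (s t : Set Ordinal), s ∈ U β → s ⊆ t → t ∈ U β :=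
    fun β s t hs hst => Filter.mem_of_superset hs hst
  -- the function g
  refine ⟨fun ι => if {η | η < sSup (E ∩ Set.Iic ι) ∧ f η ι = 1} ∈ U (sSup (E ∩ Set.Iic ι))
    then (1 : ℤ) else (-1 : ℤ), ?_, ?_⟩
  · intro ι
    dsimp only
    split
    · exact Or.inl rfl
    · exact Or.inr rfl
  intro ξ hξΛ
  obtain ⟨e₁, he₁E, hξe₁⟩ := hEunb ξ hξΛ
  have he₁Λ : e₁ < Λ := ((hEmem e₁).1 he₁E).2.1
  refine ⟨e₁, he₁Λ, ?_⟩
  intro δ hδC hδe₁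
  have hδΛ : δ < Λ := (hclub ξ hξΛ).1 hδC
  obtain ⟨hβE, hβδ⟩ := hEcl δ hδΛ e₁ he₁E hδe₁
  set β := sSup (E ∩ Set.Iic δ) with hβ
  have he₁β : e₁ ≤ β := le_csSup ⟨δ, fun x hx => hx.2⟩ ⟨he₁E, hδe₁⟩
  have hξβ : ξ < β := lt_of_lt_of_le hξe₁ he₁β
  have hβΛ : β < Λ := lt_of_le_of_lt hβδ hδΛ
  have h0β : 0 < β := ((hEmem β).1 hβE).1
  -- the next point of E above β
  have hNset : {x | x ∈ E ∧ β < x}.Nonempty := by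
    obtain ⟨x, hx, hβx⟩ := hEunb β hβΛ
    exact ⟨x, hx, hβx⟩
  set N := sInf {x | x ∈ E ∧ β < x} with hN
  have hNmem : N ∈ {x | x ∈ E ∧ β < x} := csInf_mem hNset
  have hNE : N ∈ E := hNmem.1
  have hβN : β < N := hNmem.2
  have hδN : δ < N := by
    by_contra hcon
    push_neg at hcon
    have : N ≤ β := le_csSup ⟨δ, fun x hx => hx.2⟩ ⟨hNE, hcon⟩
    exact absurd this (not_le.2 hβN)
  have hNC : N ∈ C ξ := ((hEmem N).1 hNE).2.2.1 ξ (hξβ.trans hβN)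
  have hsuccN : clubSucc (C ξ) δ ≤ N := csInf_le' ⟨hNC, hδN⟩
  intro α α' hδα hαs hδα' hα's
  have hbint : ∀ x, δ ≤ x → x < clubSucc (C ξ) δ → sSup (E ∩ Set.Iic x) = β := by
    intro x hδx hxs
    have hxN : x < N := lt_of_lt_of_le hxs hsuccN
    apply le_antisymm
    · refine csSup_le ⟨β, hβE, hβδ.trans hδx⟩ (fun z hz => ?_)
      by_contra hcon
      push_neg at hcon
      have hNz : N ≤ z := csInf_le' ⟨hz.1, hcon⟩
      exact absurd (lt_of_le_of_lt (hNz.trans hz.2) hxN) (lt_irrefl N)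
    · exact le_csSup ⟨x, fun z hz => hz.2⟩ ⟨hβE, hβδ.trans hδx⟩
  have hbα : sSup (E ∩ Set.Iic α) = β := hbint α hδα hαs
  have hbα' : sSup (E ∩ Set.Iic α') = β := hbint α' hδα' hα's
  have key : ∀ η, ξ ≤ η → η < β → f ξ α * f η α = f ξ α' * f η α' := by
    intro η hξη hηβ
    rcases eq_or_lt_of_le hξη with rfl | hlt
    · rcases hval ξ hξΛ α with h1 | h1 <;> rcases hval ξ hξΛ α' with h2 | h2 <;>
        rw [h1, h2] <;> norm_num
    · have hηΛ : η < Λ := hηβ.trans hβΛ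
      have hεlt : ε ξ η < β := ((hEmem β).1 hβE).2.2.2 ξ η hlt hηβ
      have hconst := (hε ξ η hlt hηΛ).2 δ hδC (le_of_lt (lt_of_lt_of_le hεlt hβδ))
      exact hconst α α' hδα hαs hδα' hα's
  have hT : Set.Ico ξ β ∈ U β := hUtail β h0β ξ hξβ
  show f ξ α * _ = f ξ α' * _
  dsimp only
  rw [hbα, hbα']
  set A : Set Ordinal := {η | η < β ∧ f η α = 1} with hA
  set A' : Set Ordinal := {η | η < β ∧ f η α' = 1} with hA'
  have hvalβ : ∀ η, η < β → f η α = 1 ∨ f η α = -1 := fun η hη =>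
    hval η (hη.trans hβΛ) α
  have hvalβ' : ∀ η, η < β → f η α' = 1 ∨ f η α' = -1 := fun η hη =>
    hval η (hη.trans hβΛ) α'
  rcases hval ξ hξΛ α with h1 | h1 <;> rcases hval ξ hξΛ α' with h2 | h2
  -- case 1: f ξ α = 1 = f ξ α'
  · have hsame : ∀ η, η ∈ Set.Ico ξ β → f η α = f η α' := by
      intro η hη
      have hk := key η hη.1 hη.2
      rw [h1, h2] at hk
      simpa using hk
    have hinter : A ∩ Set.Ico ξ β = A' ∩ Set.Ico ξ β := by
      ext η
      simp only [hA, hA', Set.mem_inter_iff, Set.mem_setOf_eq, Set.mem_Ico]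
      constructor
      · rintro ⟨⟨hηβ, hfη⟩, hT'⟩
        exact ⟨⟨hηβ, by rw [← hsame η ⟨hT'.1, hT'.2⟩]; exact hfη⟩, hT'⟩
      · rintro ⟨⟨hηβ, hfη⟩, hT'⟩
        exact ⟨⟨hηβ, by rw [hsame η ⟨hT'.1, hT'.2⟩]; exact hfη⟩, hT'⟩
    have hAiff : A ∈ U β ↔ A' ∈ U β := by
      constructor
      · intro h
        have h' : A' ∩ Set.Ico ξ β ∈ U β := hinter ▸ hUinter β _ _ h hT
        exact hUmono β _ _ h' Set.inter_subset_left
      · intro h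
        have h' : A ∩ Set.Ico ξ β ∈ U β := hinter.symm ▸ hUinter β _ _ h hT
        exact hUmono β _ _ h' Set.inter_subset_left
    rw [h1, h2]
    by_cases hAU : A ∈ U β
    · rw [if_pos hAU, if_pos (hAiff.1 hAU)]
    · rw [if_neg hAU, if_neg (fun h => hAU (hAiff.2 h))]
  -- case 2: f ξ α = 1, f ξ α' = -1
  · have hopp : ∀ η, η ∈ Set.Ico ξ β → f η α = - f η α' := by
      intro η hη
      have hk := key η hη.1 hη.2
      rw [h1, h2] at hk
      linarith
    have hinter : A ∩ Set.Ico ξ β = A'ᶜ ∩ Set.Ico ξ β := by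
      ext η
      simp only [hA, hA', Set.mem_inter_iff, Set.mem_setOf_eq, Set.mem_Ico, Set.mem_compl_iff]
      constructor
      · rintro ⟨⟨hηβ, hfη⟩, hT'⟩
        refine ⟨?_, hT'⟩
        rintro ⟨-, hfη'⟩
        rw [hopp η ⟨hT'.1, hT'.2⟩, hfη'] at hfη
        norm_num at hfη
      · rintro ⟨hc, hT'⟩
        refine ⟨⟨hT'.2, ?_⟩, hT'⟩
        rcases hvalβ' η hT'.2 with h | h
        · exact absurd ⟨hT'.2, h⟩ hc
        · rw [hopp η ⟨hT'.1, hT'.2⟩, h]; norm_num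
    have hAiff : A ∈ U β ↔ A' ∉ U β := by
      rw [← Ultrafilter.compl_mem_iff_notMem]
      constructor
      · intro h
        have h' : A'ᶜ ∩ Set.Ico ξ β ∈ U β := hinter ▸ hUinter β _ _ h hT
        exact hUmono β _ _ h' Set.inter_subset_left
      · intro h
        have h' : A ∩ Set.Ico ξ β ∈ U β := hinter.symm ▸ hUinter β _ _ h hT
        exact hUmono β _ _ h' Set.inter_subset_left
    rw [h1, h2]
    by_cases hAU : A ∈ U β
    · rw [if_pos hAU, if_neg (hAiff.1 hAU)]; norm_num
    · have hA'U : A' ∈ U β := by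
        by_contra h
        exact hAU (hAiff.2 h)
      rw [if_neg hAU, if_pos hA'U]; norm_num
  -- case 3: f ξ α = -1, f ξ α' = 1
  · have hopp : ∀ η, η ∈ Set.Ico ξ β → f η α = - f η α' := by
      intro η hη
      have hk := key η hη.1 hη.2
      rw [h1, h2] at hk
      linarith
    have hinter : A ∩ Set.Ico ξ β = A'ᶜ ∩ Set.Ico ξ β := by
      ext η
      simp only [hA, hA', Set.mem_inter_iff, Set.mem_setOf_eq, Set.mem_Ico, Set.mem_compl_iff]
      constructor
      · rintro ⟨⟨hηβ, hfη⟩, hT'⟩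
        refine ⟨?_, hT'⟩
        rintro ⟨-, hfη'⟩
        rw [hopp η ⟨hT'.1, hT'.2⟩, hfη'] at hfη
        norm_num at hfη
      · rintro ⟨hc, hT'⟩
        refine ⟨⟨hT'.2, ?_⟩, hT'⟩
        rcases hvalβ' η hT'.2 with h | h
        · exact absurd ⟨hT'.2, h⟩ hc
        · rw [hopp η ⟨hT'.1, hT'.2⟩, h]; norm_num
    have hAiff : A ∈ U β ↔ A' ∉ U β := by
      rw [← Ultrafilter.compl_mem_iff_notMem]
      constructor
      · intro h
        have h' : A'ᶜ ∩ Set.Ico ξ β ∈ U β := hinter ▸ hUinter β _ _ h hT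
        exact hUmono β _ _ h' Set.inter_subset_left
      · intro h
        have h' : A ∩ Set.Ico ξ β ∈ U β := hinter.symm ▸ hUinter β _ _ h hT
        exact hUmono β _ _ h' Set.inter_subset_left
    rw [h1, h2]
    by_cases hAU : A ∈ U β
    · rw [if_pos hAU, if_neg (hAiff.1 hAU)]; norm_num
    · have hA'U : A' ∈ U β := by
        by_contra h
        exact hAU (hAiff.2 h)
      rw [if_neg hAU, if_pos hA'U]; norm_num
  -- case 4: f ξ α = -1 = f ξ α'
  · have hsame : ∀ η, η ∈ Set.Ico ξ β → f η α = f η α' := by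
      intro η hη
      have hk := key η hη.1 hη.2
      rw [h1, h2] at hk
      linarith
    have hinter : A ∩ Set.Ico ξ β = A' ∩ Set.Ico ξ β := by
      ext η
      simp only [hA, hA', Set.mem_inter_iff, Set.mem_setOf_eq, Set.mem_Ico]
      constructor
      · rintro ⟨⟨hηβ, hfη⟩, hT'⟩
        exact ⟨⟨hηβ, by rw [← hsame η ⟨hT'.1, hT'.2⟩]; exact hfη⟩, hT'⟩
      · rintro ⟨⟨hηβ, hfη⟩, hT'⟩
        exact ⟨⟨hηβ, by rw [hsame η ⟨hT'.1, hT'.2⟩]; exact hfη⟩, hT'⟩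
    have hAiff : A ∈ U β ↔ A' ∈ U β := by
      constructor
      · intro h
        have h' : A' ∩ Set.Ico ξ β ∈ U β := hinter ▸ hUinter β _ _ h hT
        exact hUmono β _ _ h' Set.inter_subset_left
      · intro h
        have h' : A ∩ Set.Ico ξ β ∈ U β := hinter.symm ▸ hUinter β _ _ h hT
        exact hUmono β _ _ h' Set.inter_subset_left
    rw [h1, h2]
    by_cases hAU : A ∈ U β
    · rw [if_pos hAU, if_pos (hAiff.1 hAU)]
    · rw [if_neg hAU, if_neg (fun h => hAU (hAiff.2 h))]
end
end

section
/- Let H be a Hilbert space, let L be a closed subspace of H whose Hilbert space dimension equals that of H, let P ∈ B(H) be the orthogonal projection onto L, and let π : B(H) → B(H)/K(H) be the quotient map onto the Calkin algebra. Let Φ be a *-automorphism of B(H)/K(H). Suppose there exists v ∈ B(H)/K(H) with v* v = π(P) and v v* = Φ(π(P)) such that Φ(y) = v y v* for every y in the corner π(P)·(B(H)/K(H))·π(P). Then Φ is inner, i.e., there exists a unitary w ∈ B(H)/K(H) with Φ(x) = w x w* for all x ∈ B(H)/K(H). -/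
noncomputable section

variable (H : Type) [NormedAddCommGroup H] [InnerProductSpace ℂ H] [CompleteSpace H]

/-- The Calkin algebra B(H)/K(H): the quotient of the bounded operators by the
(equivalence) relation "the difference is a compact operator". -/
def Calkin : Type :=
  Quot (fun x y : H →L[ℂ] H => IsCompactOperator ⇑(x - y))

/-- The quotient map π : B(H) → B(H)/K(H). -/
def cmk (x : H →L[ℂ] H) : Calkin H := Quot.mk _ x

/-- `Φ` is a *-automorphism of the Calkin algebra: it is bijective and respects, on
representatives, addition, multiplication, the complex scalar multiplication and the
adjoint operation. -/
def IsCalkinAut (Φ : Calkin H → Calkin H) : Prop :=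
  Function.Bijective Φ ∧
  (∀ a b a' b' : H →L[ℂ] H, Φ (cmk H a) = cmk H a' → Φ (cmk H b) = cmk H b' →
      Φ (cmk H (a + b)) = cmk H (a' + b') ∧ Φ (cmk H (a * b)) = cmk H (a' * b')) ∧
  (∀ (c : ℂ) (a a' : H →L[ℂ] H), Φ (cmk H a) = cmk H a' →
      Φ (cmk H (c • a)) = cmk H (c • a')) ∧
  (∀ a a' : H →L[ℂ] H, Φ (cmk H a) = cmk H a' → Φ (cmk H (star a)) = cmk H (star a'))

namespace CalkinAux

variable {H}

theorem cpt_of_eq {a b : H →L[ℂ] H} (h : a = b) : IsCompactOperator ⇑(a - b) := by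
  subst h
  simpa using (isCompactOperator_zero : IsCompactOperator (0 : H → H))

theorem cpt_trans {a b c : H →L[ℂ] H} (h1 : IsCompactOperator ⇑(a - b))
    (h2 : IsCompactOperator ⇑(b - c)) : IsCompactOperator ⇑(a - c) := by
  have e : ⇑(a - c) = ⇑(a - b) + ⇑(b - c) := by
    ext x
    simp [ContinuousLinearMap.sub_apply, sub_add_sub_cancel]
  rw [e]
  exact h1.add h2

theorem cpt_symm {a b : H →L[ℂ] H} (h : IsCompactOperator ⇑(a - b)) :
    IsCompactOperator ⇑(b - a) := by
  have e : ⇑(b - a) = -⇑(a - b) := by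
    ext x
    simp [ContinuousLinearMap.sub_apply]
  rw [e]
  exact h.neg

theorem cpt_mul_left (c : H →L[ℂ] H) {a b : H →L[ℂ] H} (h : IsCompactOperator ⇑(a - b)) :
    IsCompactOperator ⇑(c * a - c * b) := by
  have e : ⇑(c * a - c * b) = ⇑c ∘ ⇑(a - b) := by
    ext x
    simp [ContinuousLinearMap.sub_apply, ContinuousLinearMap.mul_apply]
  rw [e]
  exact h.continuous_comp c.continuous

theorem cpt_mul_right (c : H →L[ℂ] H) {a b : H →L[ℂ] H} (h : IsCompactOperator ⇑(a - b)) :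
    IsCompactOperator ⇑(a * c - b * c) := by
  have e : ⇑(a * c - b * c) = ⇑(a - b) ∘ ⇑c := by
    ext x
    simp [ContinuousLinearMap.sub_apply, ContinuousLinearMap.mul_apply]
  rw [e]
  exact h.comp_clm c

/-- The predicate "`a - (-)` is compact", descended to the Calkin algebra. -/
def cptWith (a : H →L[ℂ] H) : Calkin H → Prop :=
  Quot.lift (fun y => IsCompactOperator ⇑(a - y)) fun y z hyz =>
    propext ⟨fun h => cpt_trans h hyz, fun h => cpt_trans h (cpt_symm hyz)⟩

theorem cpt_of_cmk_eq {a b : H →L[ℂ] H} (h : cmk H a = cmk H b) :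
    IsCompactOperator ⇑(a - b) := by
  have h0 : cptWith a (cmk H a) := cpt_of_eq rfl
  rw [h] at h0
  exact h0

theorem calkin_exists_rep (q : Calkin H) : ∃ a : H →L[ℂ] H, cmk H a = q :=
  Quot.exists_rep q

end CalkinAux

open CalkinAux

open scoped ComplexInnerProductSpace in
/-- **Lemma.** Let `L` be a closed subspace of `H` of the same Hilbert space dimension as
`H`, with orthogonal projection `P`, and let `Φ` be a *-automorphism of the Calkin
algebra B(H)/K(H).  If `Φ` is implemented on the corner `π(P)(B(H)/K(H))π(P)` by an
element `v` with `v* v = π(P)` and `v v* = Φ(π(P))`, then `Φ` is inner. -/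
theorem inner_of_inner_on_corner
    (L : Submodule ℂ H) (hLclosed : IsClosed (L : Set H))
    (hdim : ∃ (ι : Type) (_ : HilbertBasis ι ℂ L) (_ : HilbertBasis ι ℂ H), True)
    (P : H →L[ℂ] H) (hP : ∀ w : H, P w ∈ L ∧ w - P w ∈ Lᗮ)
    (Φ : Calkin H → Calkin H) (hΦ : IsCalkinAut H Φ)
    (hcorner : ∃ v : H →L[ℂ] H,
      IsCompactOperator ⇑(star v * v - P) ∧
      Φ (cmk H P) = cmk H (v * star v) ∧
      (∀ y : H →L[ℂ] H, IsCompactOperator ⇑(P * y * P - y) →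
        Φ (cmk H y) = cmk H (v * y * star v))) :
    ∃ w : H →L[ℂ] H, IsCompactOperator ⇑(star w * w - 1) ∧
      IsCompactOperator ⇑(w * star w - 1) ∧
      ∀ x : H →L[ℂ] H, Φ (cmk H x) = cmk H (w * x * star w) := by
  classical
  obtain ⟨ι, bL, bH, -⟩ := hdim
  haveI : CompleteSpace L := hLclosed.completeSpace_coe
  set e : H ≃ₗᵢ[ℂ] L := bH.repr.trans bL.repr.symm with he
  set S : H →L[ℂ] H := L.subtypeL.comp e.toLinearIsometry.toContinuousLinearMap with hSdef
  have hSapp : ∀ x : H, S x = (e x : H) := fun x => rfl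
  have hinner : ∀ x y : H, ⟪S x, S y⟫ = ⟪x, y⟫ := by
    intro x y
    rw [hSapp, hSapp, ← Submodule.coe_inner, e.inner_map_map]
  have hS1 : star S * S = 1 := by
    ext x
    refine ext_inner_right ℂ fun r => ?_
    rw [ContinuousLinearMap.mul_apply, ContinuousLinearMap.star_eq_adjoint,
      ContinuousLinearMap.adjoint_inner_left, hinner, ContinuousLinearMap.one_apply]
  have hSL : ∀ x : H, S x ∈ L := fun x => (e x).2
  have hSsurj : ∀ r : H, r ∈ L → ∃ z : H, S z = r := by
    intro r hr
    refine ⟨e.symm ⟨r, hr⟩, ?_⟩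
    rw [hSapp, e.apply_symm_apply]
  have hSS : S * star S = P := by
    ext x
    have h1 : (S * star S) x ∈ L := hSL _
    have h2 : x - (S * star S) x ∈ Lᗮ := by
      rw [Submodule.mem_orthogonal]
      intro r hr
      obtain ⟨z, rfl⟩ := hSsurj r hr
      rw [inner_sub_right, ContinuousLinearMap.mul_apply,
        show ⟪S z, S ((star S) x)⟫ = ⟪z, (star S) x⟫ from hinner _ _,
        ContinuousLinearMap.star_eq_adjoint, ContinuousLinearMap.adjoint_inner_right,
        sub_self]
    obtain ⟨hPx, hPo⟩ := hP x
    have hdL : P x - (S * star S) x ∈ L := L.sub_mem hPx h1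
    have hdO : P x - (S * star S) x ∈ Lᗮ := by
      have : P x - (S * star S) x = (x - (S * star S) x) - (x - P x) := by abel
      rw [this]
      exact Lᗮ.sub_mem h2 hPo
    have hz : P x - (S * star S) x = 0 := by
      have := (Submodule.mem_orthogonal L _).mp hdO _ hdL
      simpa [inner_self_eq_zero] using this
    have := sub_eq_zero.mp hz
    rw [← this]
  have hPS : P * S = S := by rw [← hSS, mul_assoc, hS1, mul_one]
  have hSP : star S * P = star S := by rw [← hSS, ← mul_assoc, hS1, one_mul]
  have hPP : P * P = P := by
    rw [← hSS, ← mul_assoc, mul_assoc S, hS1, mul_one]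
  obtain ⟨v, hv1, hv2, hv3⟩ := hcorner
  obtain ⟨u, hu⟩ := calkin_exists_rep (Φ (cmk H S))
  have huS : Φ (cmk H S) = cmk H u := hu.symm
  have hmul : ∀ a b a' b' : H →L[ℂ] H, Φ (cmk H a) = cmk H a' → Φ (cmk H b) = cmk H b' →
      Φ (cmk H (a * b)) = cmk H (a' * b') := fun a b a' b' h1 h2 =>
    (hΦ.2.1 a b a' b' h1 h2).2
  have huS' : Φ (cmk H (star S)) = cmk H (star u) := hΦ.2.2.2 S u huS
  -- Φ fixes the identity
  have hΦ1 : Φ (cmk H 1) = cmk H 1 := by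
    obtain ⟨e₀, he₀⟩ := calkin_exists_rep (Φ (cmk H 1))
    obtain ⟨z, hz⟩ := hΦ.1.2 (cmk H 1)
    obtain ⟨a, ha⟩ := calkin_exists_rep z
    have haa : Φ (cmk H a) = cmk H 1 := by rw [ha]; exact hz
    have hmm := hmul 1 a e₀ 1 he₀.symm haa
    rw [one_mul, haa, mul_one] at hmm
    exact he₀.symm.trans hmm.symm
  have hu1 : Φ (cmk H (star S * S)) = cmk H (star u * u) := hmul _ _ _ _ huS' huS
  rw [hS1] at hu1
  have huu : IsCompactOperator ⇑(star u * u - 1) :=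
    cpt_of_cmk_eq (hu1.symm.trans hΦ1)
  have hu2 : Φ (cmk H (S * star S)) = cmk H (u * star u) := hmul _ _ _ _ huS huS'
  rw [hSS] at hu2
  have huv : IsCompactOperator ⇑(u * star u - v * star v) :=
    cpt_of_cmk_eq (hu2.symm.trans hv2)
  -- the projection modulo compacts q = v v*
  have hqq : IsCompactOperator ⇑((v * star v) * (v * star v) - v * star v) := by
    have := hmul P P (v * star v) (v * star v) hv2 hv2
    rw [hPP] at this
    exact cpt_of_cmk_eq (this.symm.trans hv2)
  refine ⟨star u * v * S, ?_, ?_, ?_⟩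
  · -- star w * w ≈ 1
    have hws : star (star u * v * S) = star S * (star v * u) := by
      rw [star_mul, star_mul, star_star]
    have e0 : star (star u * v * S) * (star u * v * S)
        = (star S * star v) * (u * star u) * (v * S) := by
      rw [hws]; noncomm_ring
    have k1 : IsCompactOperator ⇑((star S * star v) * (u * star u) * (v * S)
        - (star S * star v) * (v * star v) * (v * S)) :=
      cpt_mul_right _ (cpt_mul_left _ huv)
    have e1 : (star S * star v) * (v * star v) * (v * S)
        = star S * ((star v * v) * (star v * v)) * S := by noncomm_ring
    have k2 : IsCompactOperator ⇑(star S * ((star v * v) * (star v * v)) * S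
        - star S * (P * P) * S) := by
      refine cpt_mul_right _ (cpt_mul_left _ ?_)
      exact cpt_trans (cpt_mul_right _ hv1) (cpt_mul_left _ hv1)
    have e2 : star S * (P * P) * S = 1 := by
      rw [show star S * (P * P) * S = (star S * P) * (P * S) by noncomm_ring, hSP, hPS, hS1]
    exact cpt_trans (cpt_of_eq e0) (cpt_trans k1 (cpt_trans (cpt_of_eq e1)
      (cpt_trans k2 (cpt_of_eq e2))))
  · -- w * star w ≈ 1
    have hws : star (star u * v * S) = star S * (star v * u) := by
      rw [star_mul, star_mul, star_star]
    have e0 : (star u * v * S) * star (star u * v * S)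
        = (star u * v) * (S * star S) * (star v * u) := by
      rw [hws]; noncomm_ring
    rw [hSS] at e0
    have k1 : IsCompactOperator ⇑((star u * v) * P * (star v * u)
        - (star u * v) * (star v * v) * (star v * u)) :=
      cpt_mul_right _ (cpt_mul_left _ (cpt_symm hv1))
    have e1 : (star u * v) * (star v * v) * (star v * u)
        = star u * ((v * star v) * (v * star v)) * u := by noncomm_ring
    have k2 : IsCompactOperator ⇑(star u * ((v * star v) * (v * star v)) * u
        - star u * (v * star v) * u) := cpt_mul_right _ (cpt_mul_left _ hqq)
    have k3 : IsCompactOperator ⇑(star u * (v * star v) * u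
        - star u * (u * star u) * u) :=
      cpt_mul_right _ (cpt_mul_left _ (cpt_symm huv))
    have e2 : star u * (u * star u) * u = (star u * u) * (star u * u) := by noncomm_ring
    have k4 : IsCompactOperator ⇑((star u * u) * (star u * u) - 1) := by
      refine cpt_trans (cpt_trans (cpt_mul_right _ huu) (cpt_of_eq (one_mul _))) huu
    exact cpt_trans (cpt_of_eq e0) (cpt_trans k1 (cpt_trans (cpt_of_eq e1)
      (cpt_trans k2 (cpt_trans k3 (cpt_trans (cpt_of_eq e2) k4)))))
  · -- the implementation formula
    intro x
    have hws : star (star u * v * S) = star S * (star v * u) := by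
      rw [star_mul, star_mul, star_star]
    have hyc : IsCompactOperator ⇑(P * (S * x * star S) * P - S * x * star S) := by
      refine cpt_of_eq ?_
      rw [show P * (S * x * star S) * P = (P * S) * x * (star S * P) by noncomm_ring,
        hPS, hSP]
    have h2 := hv3 (S * x * star S) hyc
    have h3 := hmul (S * x * star S) S (v * (S * x * star S) * star v) u h2 huS
    have h4 := hmul (star S) ((S * x * star S) * S) (star u)
      ((v * (S * x * star S) * star v) * u) huS' h3
    have e3 : star S * ((S * x * star S) * S) = x := by
      rw [show star S * ((S * x * star S) * S) = (star S * S) * (x * (star S * S)) by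
        noncomm_ring, hS1, one_mul, mul_one]
    have e4 : star u * ((v * (S * x * star S) * star v) * u)
        = (star u * v * S) * x * star (star u * v * S) := by
      rw [hws]; noncomm_ring
    rw [e3, e4] at h4
    exact h4

end
end
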